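/- Let (X,K) be a nonempty symmetric space with similarities, μ a maximising probability measure, and x ∈ X. Then (Kμ)(x) ≥ 1/Dmax(X); consequently there exists y ∈ supp μ with K(x,y) ≥ 1/Dmax(X). -/

import Mathlib

open MeasureTheory

/-- The typicality function of a measure `μ` with respect to a kernel `K`. -/
noncomputable def typ {X : Type*} [MeasurableSpace X] (K : X → X → ℝ) (μ : Measure X)
    (x : X) : ℝ := ∫ y, K x y ∂μ

/-- The diversity of order `q ∈ [−∞,∞]` of a probability measure `μ` with respect to a
similarity kernel `K`. -/
noncomputable def diversity {X : Type*} [MeasurableSpace X] (K : X → X → ℝ) (μ : Measure X)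
    (q : EReal) : ℝ :=
  if q = ⊤ then (essSup (typ K μ) μ)⁻¹
  else if q = ⊥ then (essInf (typ K μ) μ)⁻¹
  else if q = 1 then Real.exp (-∫ x, Real.log (typ K μ x) ∂μ)
  else (∫ x, typ K μ x ^ (q.toReal - 1) ∂μ) ^ (1 / (1 - q.toReal))

/-- The support of a measure. -/
def msupp {X : Type*} [TopologicalSpace X] [MeasurableSpace X] (μ : Measure X) : Set X :=
  {x | ∀ U : Set X, IsOpen U → x ∈ U → 0 < μ U}

lemma aux_integrable {X : Type*} [TopologicalSpace X] [CompactSpace X] [MeasurableSpace X]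
    [OpensMeasurableSpace X] (f : X → ℝ) (hf : Continuous f) (ν : Measure X)
    [IsFiniteMeasure ν] : Integrable f ν :=
  hf.integrable_of_hasCompactSupport
    (isCompact_univ.of_isClosed_subset (isClosed_tsupport f) (Set.subset_univ _))

lemma diversity_two {X : Type*} [MeasurableSpace X] (K : X → X → ℝ) (ν : Measure X) :
    diversity K ν ((2:ℝ):EReal) = (∫ z, typ K ν z ∂ν)⁻¹ := by
  have h1 : ((2:ℝ):EReal) ≠ ⊤ := EReal.coe_ne_top 2
  have h2 : ((2:ℝ):EReal) ≠ ⊥ := EReal.coe_ne_bot 2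
  have h3 : ((2:ℝ):EReal) ≠ 1 := by
    rw [show (1:EReal) = ((1:ℝ):EReal) by norm_num]
    exact_mod_cast (by norm_num : (2:ℝ) ≠ 1)
  simp only [diversity, if_neg h1, if_neg h2, if_neg h3, EReal.toReal_coe]
  norm_num [Real.rpow_one, Real.rpow_neg_one]


/-- if `μ` is a maximising measure on a nonempty symmetric space with
similarities and `x ∈ X`, then `(Kμ)(x) ≥ 1/Dmax(X)`, and consequently there is
`y ∈ supp μ` with `K(x,y) ≥ 1/Dmax(X)`.  Here `Dmax(X)` is realised as the diversity of
order `2` of the maximising measure `μ`. -/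
theorem stmt17 {X : Type*} [TopologicalSpace X] [CompactSpace X] [T2Space X] [Nonempty X]
    [MeasurableSpace X] [BorelSpace X]
    (K : X → X → ℝ) (hKc : Continuous fun p : X × X => K p.1 p.2)
    (hKnn : ∀ x y, 0 ≤ K x y) (hKd : ∀ x, 0 < K x x)
    (hKs : ∀ x y, K x y = K y x)
    (μ : ProbabilityMeasure X)
    (hmax : ∀ q : EReal, 0 ≤ q → ∀ ν : ProbabilityMeasure X,
      diversity K (ν : Measure X) q ≤ diversity K (μ : Measure X) q)
    (x : X) :
    1 / diversity K (μ : Measure X) ((2 : ℝ) : EReal) ≤ typ K (μ : Measure X) x ∧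
    ∃ y ∈ msupp (μ : Measure X),
      1 / diversity K (μ : Measure X) ((2 : ℝ) : EReal) ≤ K x y := by
  classical
  set m : Measure X := (μ : Measure X) with hm
  have h2nn : (0:EReal) ≤ ((2:ℝ):EReal) := by exact_mod_cast (by norm_num : (0:ℝ) ≤ 2)
  -- continuity of sections
  have hKc1 : ∀ z : X, Continuous fun y => K z y := fun z => hKc.comp (Continuous.prodMk_right z)
  have hKc2 : ∀ y : X, Continuous fun z => K z y :=
    fun y => hKc.comp (continuous_id.prodMk continuous_const)
  -- typ is continuous, nonneg
  have htypc : ∀ (ν : Measure X), IsProbabilityMeasure ν → Continuous (typ K ν) := by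
    intro ν hν
    haveI := hν
    have hlip : LipschitzWith 1 (fun f : C(X,ℝ) => ∫ y, f y ∂ν) := by
      apply LipschitzWith.of_dist_le_mul
      intro f g
      rw [NNReal.coe_one, one_mul, Real.dist_eq,
        ← integral_sub (aux_integrable _ f.continuous ν) (aux_integrable _ g.continuous ν)]
      calc |∫ y, (f y - g y) ∂ν| ≤ ∫ y, |f y - g y| ∂ν := by
            simpa [Real.norm_eq_abs] using
              norm_integral_le_integral_norm (μ := ν) (fun y => f y - g y)
      _ ≤ ∫ _, dist f g ∂ν := by
            refine integral_mono (aux_integrable _ (f.continuous.sub g.continuous).abs ν)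
              (integrable_const _) (fun y => ?_)
            rw [← Real.dist_eq]
            exact ContinuousMap.dist_apply_le_dist y
      _ = dist f g := by simp
    exact hlip.continuous.comp (ContinuousMap.curry ⟨_, hKc⟩).continuous
  have htypnn : ∀ (ν : Measure X) (z : X), 0 ≤ typ K ν z :=
    fun ν z => integral_nonneg (fun y => hKnn z y)
  have htypint : ∀ (ν ρ : Measure X), IsProbabilityMeasure ν → IsProbabilityMeasure ρ →
      Integrable (typ K ν) ρ := by
    intro ν ρ hν hρ
    haveI := hρ
    exact aux_integrable _ (htypc ν hν) ρ
  haveI : IsProbabilityMeasure m := μ.prop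
  set I := ∫ z, typ K m z ∂m with hI
  have hInn : 0 ≤ I := integral_nonneg (fun z => htypnn m z)
  have hdivmu : diversity K m ((2:ℝ):EReal) = I⁻¹ := diversity_two K m
  -- I > 0 via dirac measure
  obtain ⟨x₀⟩ := ‹Nonempty X›
  have hIpos : 0 < I := by
    rcases hInn.lt_or_eq with h | h
    · exact h
    · exfalso
      have hδ : IsProbabilityMeasure (Measure.dirac x₀) := inferInstance
      have hP := hmax ((2:ℝ):EReal) h2nn ⟨Measure.dirac x₀, hδ⟩
      have hdd : diversity K ((⟨Measure.dirac x₀, hδ⟩ : ProbabilityMeasure X) : Measure X)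
          ((2:ℝ):EReal) = (K x₀ x₀)⁻¹ := by
        show diversity K (Measure.dirac x₀) _ = _
        rw [diversity_two, integral_dirac]
        congr 1
        show (∫ y, K x₀ y ∂(Measure.dirac x₀)) = K x₀ x₀
        rw [integral_dirac]
      rw [hdivmu] at hP
      have hP2 : (K x₀ x₀)⁻¹ ≤ I⁻¹ := le_of_eq hdd.symm |>.trans hP
      rw [← h] at hP2
      simp at hP2
      linarith [hKd x₀]
  -- core inequality
  have hcore : ∀ x' : X, I ≤ typ K m x' := by
    intro x'
    by_contra hlt
    push_neg at hlt
    set t := typ K m x' with ht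
    set a := I - t with ha
    have hapos : 0 < a := sub_pos.mpr hlt
    set b := |I - 2*t + K x' x'| + 1 with hb
    have hbpos : 0 < b := by positivity
    set s := min (a / (2*b)) (1/2) with hs
    have hspos : 0 < s := lt_min (by positivity) one_half_pos
    have hs1 : s ≤ 1/2 := min_le_right _ _
    have hsnn : 0 ≤ s := hspos.le
    have h1s : 0 ≤ 1 - s := by linarith
    set ν : Measure X := ENNReal.ofReal (1-s) • m + ENNReal.ofReal s • Measure.dirac x' with hν
    have hνprob : IsProbabilityMeasure ν := by
      constructor
      rw [hν]
      simp only [Measure.add_apply, Measure.smul_apply, smul_eq_mul, measure_univ, mul_one]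
      rw [← ENNReal.ofReal_add h1s hsnn]
      norm_num
    haveI := hνprob
    have hνint : ∀ g : X → ℝ, Continuous g →
        ∫ y, g y ∂ν = (1-s) * ∫ y, g y ∂m + s * g x' := by
      intro g hg
      rw [hν, integral_add_measure ((aux_integrable g hg m).smul_measure ENNReal.ofReal_ne_top)
        ((aux_integrable g hg (Measure.dirac x')).smul_measure ENNReal.ofReal_ne_top),
        integral_smul_measure, integral_smul_measure, integral_dirac,
        ENNReal.toReal_ofReal h1s, ENNReal.toReal_ofReal hsnn]
      simp [smul_eq_mul]
    have htypν : ∀ z, typ K ν z = (1-s) * typ K m z + s * K z x' := fun z =>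
      hνint _ (hKc1 z)
    have hsect : ∫ z, K z x' ∂m = t := by
      rw [show (fun z => K z x') = fun z => K x' z from funext (fun z => hKs z x'), ht]
      rfl
    have hintm : ∫ z, typ K ν z ∂m = (1-s)*I + s*t := by
      simp only [htypν]
      rw [integral_add ((htypint m m inferInstance inferInstance).const_mul _)
        ((aux_integrable _ (hKc2 x') m).const_mul _), integral_const_mul, integral_const_mul,
        hsect, ← hI]
    set J := ∫ z, typ K ν z ∂ν with hJ
    have hJeq : J = (1-s)*((1-s)*I + s*t) + s*((1-s)*t + s*(K x' x')) := by
      rw [hJ, hνint (typ K ν) (htypc ν hνprob), hintm, htypν x', ← ht]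
    -- J < I
    have hsb : s * b ≤ a / 2 := by
      have h1 : s ≤ a / (2*b) := min_le_left _ _
      calc s * b ≤ (a / (2*b)) * b := mul_le_mul_of_nonneg_right h1 hbpos.le
      _ = a / 2 := by field_simp
    have habs : I - 2*t + K x' x' ≤ b := by
      rw [hb]
      have := le_abs_self (I - 2*t + K x' x')
      linarith
    have hJlt : J < I := by
      have hbr : s * (I - 2*t + K x' x') ≤ a / 2 :=
        le_trans (mul_le_mul_of_nonneg_left habs hsnn) hsb
      have hfact : J - I = s * (2*(t - I) + s*(I - 2*t + K x' x')) := by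
        rw [hJeq]; ring
      nlinarith [mul_le_mul_of_nonneg_left hbr hsnn, hspos, hapos]
    have hJpos : 0 < J := by
      rw [hJeq]
      have htnn : 0 ≤ t := by rw [ht]; exact htypnn m x'
      nlinarith [mul_pos (mul_pos hspos hspos) (hKd x'),
        mul_nonneg (mul_nonneg h1s h1s) hIpos.le,
        mul_nonneg (mul_nonneg hsnn h1s) htnn]
    have hPν := hmax ((2:ℝ):EReal) h2nn ⟨ν, hνprob⟩
    rw [hdivmu] at hPν
    have hdν : diversity K ((⟨ν, hνprob⟩ : ProbabilityMeasure X) : Measure X)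
        ((2:ℝ):EReal) = J⁻¹ := by
      show diversity K ν _ = J⁻¹
      rw [diversity_two, ← hJ]
    have hPν2 : J⁻¹ ≤ I⁻¹ := le_of_eq hdν.symm |>.trans hPν
    have hIJ : I ≤ J := (inv_le_inv₀ hJpos hIpos).mp hPν2
    linarith
  -- assemble
  have hone : 1 / diversity K m ((2:ℝ):EReal) = I := by rw [hdivmu, one_div, inv_inv]
  rw [hone]
  refine ⟨hcore x, ?_⟩
  set S := {y : X | I ≤ K x y} with hS
  have hScl : IsClosed S := isClosed_le continuous_const (hKc1 x)
  have hSm : MeasurableSet S := hScl.measurableSet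
  have hSpos : 0 < m S := by
    by_contra hcontra
    have h0 : m S = 0 := by simpa using le_of_not_gt hcontra
    have hfae : 0 ≤ᵐ[m] fun y => I - K x y := by
      rw [Filter.EventuallyLE, ae_iff]
      refine measure_mono_null (fun y hy => ?_) h0
      simp only [Set.mem_setOf_eq, Pi.zero_apply, not_le] at hy
      exact Set.mem_setOf_eq ▸ le_of_lt (by linarith)
    have hint : Integrable (fun y => I - K x y) m :=
      aux_integrable _ (continuous_const.sub (hKc1 x)) m
    have hpos : 0 < ∫ y, (I - K x y) ∂m := by
      rw [integral_pos_iff_support_of_nonneg_ae hfae hint]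
      have hSc : m Sᶜ = 1 := by
        rw [measure_compl hSm (measure_ne_top m S), h0, measure_univ, tsub_zero]
      calc (0:ENNReal) < 1 := by norm_num
      _ = m Sᶜ := hSc.symm
      _ ≤ m (Function.support fun y => I - K x y) := by
          refine measure_mono (fun y hy => ?_)
          simp only [Set.mem_compl_iff, hS, Set.mem_setOf_eq, not_le] at hy
          simp only [Function.mem_support]
          exact sub_ne_zero.mpr (ne_of_gt hy)
    have heq : ∫ y, (I - K x y) ∂m = I - typ K m x := by
      rw [integral_sub (integrable_const I) (aux_integrable _ (hKc1 x) m)]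
      simp [typ]
    linarith [hcore x, hpos, heq ▸ hpos]
  -- find y in S ∩ msupp
  by_contra hcon
  push_neg at hcon
  have hcov : ∀ y ∈ S, ∃ U : Set X, IsOpen U ∧ y ∈ U ∧ m U = 0 := by
    intro y hy
    have hym : y ∉ msupp m := by
      intro hmem
      exact absurd hy (by simpa [hS] using (hcon y hmem).not_ge)
    simp only [msupp, Set.mem_setOf_eq, not_forall] at hym
    obtain ⟨U, hU, hyU, hU0⟩ := hym
    exact ⟨U, hU, hyU, by simpa using le_of_not_gt hU0⟩
  choose! U hUo hUy hU0 using hcov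
  have hScomp : IsCompact S := hScl.isCompact
  obtain ⟨T, hTsub, hTfin, hcov2⟩ := hScomp.elim_finite_subcover_image
    (fun y hy => hUo y hy) (fun y hy => Set.mem_biUnion hy (hUy y hy))
  have hS0 : m S = 0 := by
    refine measure_mono_null hcov2 ?_
    exact (measure_biUnion_null_iff hTfin.countable).mpr (fun y hy => hU0 y (hTsub hy))
  exact absurd hS0 hSpos.ne'
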